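/- Let α > 0, let J ∈ ℝ^{(N·O) × P} be a real matrix partitioned into N row blocks J₁, …, J_N ∈ ℝ^{O × P}, and let γ and λ denote respectively the smallest and largest singular values of J. Then for every n ∈ {1, …, N}: O·γ²/(γ² + α) ≤ tr(J_n (α I_P + Jᵀ J)⁻¹ J_nᵀ) ≤ O·λ²/(λ² + α). In particular, if γ > 0, the linearized-Laplace predictive variance tr(J_n (α I_P + Jᵀ J)⁻¹ J_nᵀ) on every training datapoint is strictly positive. -/

import Mathlib

open Matrix

section aux
variable {ι : Type*} [Fintype ι]

lemma my_dd_nonneg (v : ι → ℝ) : 0 ≤ v ⬝ᵥ v :=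
  Finset.sum_nonneg fun i _ => mul_self_nonneg _

lemma my_dot_cs (u w : ι → ℝ) : (u ⬝ᵥ w) ^ 2 ≤ (u ⬝ᵥ u) * (w ⬝ᵥ w) := by
  simpa [dotProduct, sq] using Finset.sum_mul_sq_le_sq_mul_sq Finset.univ u w

lemma my_smul_one_posDef [DecidableEq ι] {α : ℝ} (hα : 0 < α) :
    (α • (1 : Matrix ι ι ℝ)).PosDef := by
  refine Matrix.PosDef.of_dotProduct_mulVec_pos ?_ ?_
  · simp [Matrix.IsHermitian]
  · intro x hx
    have : star x ⬝ᵥ (α • (1 : Matrix ι ι ℝ)) *ᵥ x = α * (star x ⬝ᵥ x) := by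
      simp [Matrix.smul_mulVec, Matrix.one_mulVec, dotProduct_smul]
    rw [this]
    exact mul_pos hα (Matrix.dotProduct_star_self_pos_iff.2 hx)

lemma my_psd_cauchy {C : Matrix ι ι ℝ} (hC : C.PosSemidef) (u w : ι → ℝ) :
    (C *ᵥ u ⬝ᵥ w) ^ 2 ≤ (C *ᵥ u ⬝ᵥ u) * (C *ᵥ w ⬝ᵥ w) := by
  have hsym : ∀ a b : ι → ℝ, C *ᵥ a ⬝ᵥ b = C *ᵥ b ⬝ᵥ a := by
    intro a b
    have ht : Cᵀ = C := by
      simpa [Matrix.conjTranspose_eq_transpose_of_trivial] using hC.1.eq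
    rw [dotProduct_comm, Matrix.dotProduct_mulVec, ← Matrix.mulVec_transpose, ht]
  have key : ∀ s : ℝ, 0 ≤ (C *ᵥ u ⬝ᵥ u) * (s * s) + (2 * (C *ᵥ u ⬝ᵥ w)) * s + (C *ᵥ w ⬝ᵥ w) := by
    intro s
    have h := hC.dotProduct_mulVec_nonneg (w + s • u)
    simp only [star_trivial, Matrix.mulVec_add, Matrix.mulVec_smul, dotProduct_add,
      add_dotProduct, dotProduct_smul, smul_dotProduct, smul_eq_mul] at h
    have h2 := hsym u w
    rw [dotProduct_comm w (C *ᵥ w), dotProduct_comm u (C *ᵥ w), dotProduct_comm w (C *ᵥ u),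
      dotProduct_comm u (C *ᵥ u)] at h
    rw [← h2] at h
    ring_nf at h ⊢
    linarith [h]
  have := discrim_le_zero key
  simp only [discrim] at this
  nlinarith [this]

lemma my_inv_qf_bounds [DecidableEq ι] {C : Matrix ι ι ℝ} (hC : C.PosDef)
    {m Mc : ℝ} (hm : 0 < m) (hMc : 0 < Mc)
    (hlo : ∀ w : ι → ℝ, m * (w ⬝ᵥ w) ≤ C *ᵥ w ⬝ᵥ w)
    (hhi : ∀ w : ι → ℝ, C *ᵥ w ⬝ᵥ w ≤ Mc * (w ⬝ᵥ w)) (w : ι → ℝ) :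
    (w ⬝ᵥ w) / Mc ≤ C⁻¹ *ᵥ w ⬝ᵥ w ∧ C⁻¹ *ᵥ w ⬝ᵥ w ≤ (w ⬝ᵥ w) / m := by
  have hCd : IsUnit C.det := (Matrix.isUnit_iff_isUnit_det C).1 hC.isUnit
  set u := C⁻¹ *ᵥ w with hu
  have hCu : C *ᵥ u = w := by
    rw [hu, Matrix.mulVec_mulVec, Matrix.mul_nonsing_inv C hCd, Matrix.one_mulVec]
  have htq : C *ᵥ u ⬝ᵥ u = u ⬝ᵥ w := by rw [hCu, dotProduct_comm]
  have huu : 0 ≤ u ⬝ᵥ u := my_dd_nonneg u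
  have hww : 0 ≤ w ⬝ᵥ w := my_dd_nonneg w
  have ht0 : 0 ≤ u ⬝ᵥ w := by
    have h1 := hlo u
    rw [htq] at h1
    nlinarith [h1, huu]
  have hgoal_eq : C⁻¹ *ᵥ w ⬝ᵥ w = u ⬝ᵥ w := rfl
  rw [hgoal_eq]
  constructor
  · -- lower bound
    have hcs := my_psd_cauchy hC.posSemidef u w
    rw [hCu, dotProduct_comm w u] at hcs
    have h2 := hhi w
    rw [div_le_iff₀ hMc]
    rcases eq_or_lt_of_le hww with h0 | h0
    · rw [← h0]
      positivity
    · nlinarith [hcs, h2, ht0, h0]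
  · -- upper bound
    have hcs := my_dot_cs u w
    have h1 := hlo u
    rw [htq] at h1
    rw [le_div_iff₀ hm]
    rcases eq_or_lt_of_le ht0 with h0 | h0
    · rw [← h0]
      simpa using hww
    · have key : m * (u ⬝ᵥ w) ^ 2 ≤ (u ⬝ᵥ w) * (w ⬝ᵥ w) :=
        calc m * (u ⬝ᵥ w) ^ 2 ≤ m * ((u ⬝ᵥ u) * (w ⬝ᵥ w)) := by nlinarith [hcs]
          _ = (m * (u ⬝ᵥ u)) * (w ⬝ᵥ w) := by ring
          _ ≤ (u ⬝ᵥ w) * (w ⬝ᵥ w) := mul_le_mul_of_nonneg_right h1 hww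
      nlinarith [key, h0]

end aux

/-- For the linearized Laplace posterior with covariance `(α I + Jᵀ J)⁻¹`,
the predictive variance `tr(J_n (α I + Jᵀ J)⁻¹ J_nᵀ)` on every training datapoint is sandwiched
between `O γ²/(γ² + α)` and `O λ²/(λ² + α)`, where `γ` and `λ` are the smallest and largest
singular values of the stacked Jacobian `J` (characterized below via the quadratic form of
`J Jᵀ`, whose eigenvalues are the squared singular values of `J`).  In particular, if `γ > 0`
the variance is strictly positive. -/
theorem lla_training_variance_bounds
    (N O P : ℕ) (hO : 0 < O)
    (J : Matrix (Fin N × Fin O) (Fin P) ℝ)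
    (α : ℝ) (hα : 0 < α)
    (γ lam : ℝ) (hγ0 : 0 ≤ γ) (hlam0 : 0 ≤ lam)
    -- `γ` is the smallest singular value of `J`: `γ²` is the least eigenvalue of `J Jᵀ`
    (hγ_le : ∀ w : Fin N × Fin O → ℝ, γ ^ 2 * (w ⬝ᵥ w) ≤ (J * Jᵀ).mulVec w ⬝ᵥ w)
    (hγ_ex : ∃ w : Fin N × Fin O → ℝ, w ≠ 0 ∧ (J * Jᵀ).mulVec w ⬝ᵥ w = γ ^ 2 * (w ⬝ᵥ w))
    -- `lam` is the largest singular value of `J`: `lam²` is the top eigenvalue of `J Jᵀ`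
    (hlam_le : ∀ w : Fin N × Fin O → ℝ, (J * Jᵀ).mulVec w ⬝ᵥ w ≤ lam ^ 2 * (w ⬝ᵥ w))
    (hlam_ex : ∃ w : Fin N × Fin O → ℝ, w ≠ 0 ∧ (J * Jᵀ).mulVec w ⬝ᵥ w = lam ^ 2 * (w ⬝ᵥ w)) :
    ∀ n : Fin N,
      (O : ℝ) * γ ^ 2 / (γ ^ 2 + α) ≤
        Matrix.trace (J.submatrix (fun o : Fin O => (n, o)) id *
          (α • (1 : Matrix (Fin P) (Fin P) ℝ) + Jᵀ * J)⁻¹ *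
          (J.submatrix (fun o : Fin O => (n, o)) id)ᵀ) ∧
      Matrix.trace (J.submatrix (fun o : Fin O => (n, o)) id *
          (α • (1 : Matrix (Fin P) (Fin P) ℝ) + Jᵀ * J)⁻¹ *
          (J.submatrix (fun o : Fin O => (n, o)) id)ᵀ) ≤
        (O : ℝ) * lam ^ 2 / (lam ^ 2 + α) ∧
      (0 < γ →
        0 < Matrix.trace (J.submatrix (fun o : Fin O => (n, o)) id *
          (α • (1 : Matrix (Fin P) (Fin P) ℝ) + Jᵀ * J)⁻¹ *
          (J.submatrix (fun o : Fin O => (n, o)) id)ᵀ)) := by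
  intro n
  set A : Matrix (Fin P) (Fin P) ℝ := α • 1 + Jᵀ * J with hAdef
  set C : Matrix (Fin N × Fin O) (Fin N × Fin O) ℝ := α • 1 + J * Jᵀ with hCdef
  have hJJ : (J * Jᵀ).PosSemidef := by
    have := Matrix.posSemidef_self_mul_conjTranspose J
    simpa [Matrix.conjTranspose_eq_transpose_of_trivial] using this
  have hJTJ : (Jᵀ * J).PosSemidef := by
    have := Matrix.posSemidef_conjTranspose_mul_self J
    simpa [Matrix.conjTranspose_eq_transpose_of_trivial] using this
  have hA : A.PosDef := (my_smul_one_posDef hα).add_posSemidef hJTJ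
  have hC : C.PosDef := (my_smul_one_posDef hα).add_posSemidef hJJ
  have hAd : IsUnit A.det := (Matrix.isUnit_iff_isUnit_det A).1 hA.isUnit
  have hCd : IsUnit C.det := (Matrix.isUnit_iff_isUnit_det C).1 hC.isUnit
  -- push-through identity
  have hCJ : C * J = J * A := by
    rw [hAdef, hCdef, Matrix.add_mul, Matrix.mul_add, Matrix.smul_mul, Matrix.mul_smul,
      Matrix.one_mul, Matrix.mul_one, Matrix.mul_assoc]
  have push : J * A⁻¹ = C⁻¹ * J := by
    calc J * A⁻¹ = C⁻¹ * (C * J) * A⁻¹ := by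
          rw [← Matrix.mul_assoc, Matrix.nonsing_inv_mul C hCd, Matrix.one_mul]
      _ = C⁻¹ * J * (A * A⁻¹) := by rw [hCJ, Matrix.mul_assoc, Matrix.mul_assoc, Matrix.mul_assoc]
      _ = C⁻¹ * J := by rw [Matrix.mul_nonsing_inv A hAd, Matrix.mul_one]
  have hM : J * A⁻¹ * Jᵀ = 1 - α • C⁻¹ := by
    have hJJt : J * Jᵀ = C - α • 1 := by rw [hCdef]; abel
    rw [push, Matrix.mul_assoc, hJJt, Matrix.mul_sub, Matrix.nonsing_inv_mul C hCd,
      Matrix.mul_smul, Matrix.mul_one]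
  -- quadratic form bounds on C
  have hClo : ∀ w : Fin N × Fin O → ℝ, (α + γ ^ 2) * (w ⬝ᵥ w) ≤ C *ᵥ w ⬝ᵥ w := by
    intro w
    have h1 := hγ_le w
    have h2 : C *ᵥ w ⬝ᵥ w = α * (w ⬝ᵥ w) + (J * Jᵀ) *ᵥ w ⬝ᵥ w := by
      rw [hCdef, Matrix.add_mulVec, add_dotProduct, Matrix.smul_mulVec,
        Matrix.one_mulVec, smul_dotProduct, smul_eq_mul]
    rw [h2]
    nlinarith [h1]
  have hChi : ∀ w : Fin N × Fin O → ℝ, C *ᵥ w ⬝ᵥ w ≤ (α + lam ^ 2) * (w ⬝ᵥ w) := by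
    intro w
    have h1 := hlam_le w
    have h2 : C *ᵥ w ⬝ᵥ w = α * (w ⬝ᵥ w) + (J * Jᵀ) *ᵥ w ⬝ᵥ w := by
      rw [hCdef, Matrix.add_mulVec, add_dotProduct, Matrix.smul_mulVec,
        Matrix.one_mulVec, smul_dotProduct, smul_eq_mul]
    rw [h2]
    nlinarith [h1]
  have hmpos : (0:ℝ) < α + γ ^ 2 := by positivity
  have hMpos : (0:ℝ) < α + lam ^ 2 := by positivity
  -- diagonal entry bounds for C⁻¹
  have hdiag : ∀ i : Fin N × Fin O,
      1 / (α + lam ^ 2) ≤ C⁻¹ i i ∧ C⁻¹ i i ≤ 1 / (α + γ ^ 2) := by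
    intro i
    set e : Fin N × Fin O → ℝ := Pi.single i 1 with he
    have hee : e ⬝ᵥ e = 1 := by
      simp [he, dotProduct, Pi.single_apply]
    have heq : C⁻¹ *ᵥ e ⬝ᵥ e = C⁻¹ i i := by
      simp [he, Matrix.mulVec_single, dotProduct, Pi.single_apply]
    have := my_inv_qf_bounds hC hmpos hMpos hClo hChi e
    rw [hee, heq] at this
    exact this
  -- trace as a sum of diagonal entries of 1 - α • C⁻¹
  have htr : Matrix.trace (J.submatrix (fun o : Fin O => (n, o)) id * A⁻¹ *
      (J.submatrix (fun o : Fin O => (n, o)) id)ᵀ) =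
      ∑ o : Fin O, (1 - α * C⁻¹ (n, o) (n, o)) := by
    rw [Matrix.trace]
    refine Finset.sum_congr rfl fun o _ => ?_
    have h1 : (J.submatrix (fun o : Fin O => (n, o)) id * A⁻¹ *
        (J.submatrix (fun o : Fin O => (n, o)) id)ᵀ).diag o =
        (J * A⁻¹ * Jᵀ) (n, o) (n, o) := by
      simp [Matrix.diag, Matrix.mul_apply, Matrix.submatrix_apply, Matrix.transpose_apply]
    rw [h1, hM]
    simp [Matrix.sub_apply, Matrix.smul_apply, smul_eq_mul]
  have hterm_lo : ∀ o : Fin O, γ ^ 2 / (γ ^ 2 + α) ≤ 1 - α * C⁻¹ (n, o) (n, o) := by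
    intro o
    have h := (hdiag (n, o)).2
    have : α * C⁻¹ (n, o) (n, o) ≤ α / (α + γ ^ 2) := by
      rw [div_eq_mul_one_div]
      exact mul_le_mul_of_nonneg_left h hα.le
    have hne : γ ^ 2 + α ≠ 0 := by positivity
    have hkey : 1 - α / (α + γ ^ 2) = γ ^ 2 / (γ ^ 2 + α) := by
      rw [add_comm α (γ ^ 2), eq_div_iff hne, sub_mul, one_mul, div_mul_cancel₀ α hne]
      ring
    linarith [this, hkey.le]
  have hterm_hi : ∀ o : Fin O, 1 - α * C⁻¹ (n, o) (n, o) ≤ lam ^ 2 / (lam ^ 2 + α) := by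
    intro o
    have h := (hdiag (n, o)).1
    have : α / (α + lam ^ 2) ≤ α * C⁻¹ (n, o) (n, o) := by
      rw [div_eq_mul_one_div]
      exact mul_le_mul_of_nonneg_left h hα.le
    have hne : lam ^ 2 + α ≠ 0 := by positivity
    have hkey : 1 - α / (α + lam ^ 2) = lam ^ 2 / (lam ^ 2 + α) := by
      rw [add_comm α (lam ^ 2), eq_div_iff hne, sub_mul, one_mul, div_mul_cancel₀ α hne]
      ring
    linarith [this, hkey.le]
  have hlo_sum : (O : ℝ) * γ ^ 2 / (γ ^ 2 + α) ≤
      ∑ o : Fin O, (1 - α * C⁻¹ (n, o) (n, o)) := by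
    have := Finset.sum_le_sum (fun o (_ : o ∈ Finset.univ) => hterm_lo o)
    simp only [Finset.sum_const, Finset.card_univ, Fintype.card_fin, nsmul_eq_mul] at this
    calc (O : ℝ) * γ ^ 2 / (γ ^ 2 + α) = (O : ℝ) * (γ ^ 2 / (γ ^ 2 + α)) := by ring
      _ ≤ _ := this
  have hhi_sum : ∑ o : Fin O, (1 - α * C⁻¹ (n, o) (n, o)) ≤
      (O : ℝ) * lam ^ 2 / (lam ^ 2 + α) := by
    have := Finset.sum_le_sum (fun o (_ : o ∈ Finset.univ) => hterm_hi o)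
    simp only [Finset.sum_const, Finset.card_univ, Fintype.card_fin, nsmul_eq_mul] at this
    calc ∑ o : Fin O, (1 - α * C⁻¹ (n, o) (n, o)) ≤ (O : ℝ) * (lam ^ 2 / (lam ^ 2 + α)) := this
      _ = (O : ℝ) * lam ^ 2 / (lam ^ 2 + α) := by ring
  refine ⟨by rw [htr]; exact hlo_sum, by rw [htr]; exact hhi_sum, fun hγ => ?_⟩
  have hposc : (0:ℝ) < (O : ℝ) * γ ^ 2 / (γ ^ 2 + α) := by
    have hO' : (0:ℝ) < (O : ℝ) := by exact_mod_cast hO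
    positivity
  calc (0:ℝ) < (O : ℝ) * γ ^ 2 / (γ ^ 2 + α) := hposc
    _ ≤ _ := by rw [htr]; exact hlo_sum
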